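/- Normalization of the general optimal weights: for every integer r ≥ 1, (i) for every l with 1 ≤ l ≤ r, Σ_{k=0}^{l-1} C^{r+l-1}_{l-1,k} = 1, and (ii) for every l with 1 ≤ l ≤ r−1, Σ_{k=1}^{l} C^{r+l-1}_{l,k} = 1. -/

import Mathlib

open Nat PowerSeries Finset


/-- The general optimal weights `C^{r+l-1}_{l-1,k}`, for `1 ≤ l ≤ r` and `0 ≤ k ≤ l-1`. -/
noncomputable def C1 (r l k : ℕ) : ℝ :=
  (1 / 2 ^ (2 * l)) * (((r : ℝ) + (l : ℝ)) / (l : ℝ)) *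
    (((l : ℝ) - (k : ℝ)) / ((r : ℝ) - (k : ℝ))) *
    (Nat.choose l k : ℝ) * ((Nat.choose r k : ℝ))⁻¹ * (Nat.choose (2 * l) l : ℝ) *
    ((Nat.choose (l + r) r : ℝ))⁻¹ * (Nat.choose (2 * r) (2 * k + 1) : ℝ)

/-- The general optimal weights `C^{r+l-1}_{l,k}`, for `1 ≤ l ≤ r-1` and `1 ≤ k ≤ l`. -/
noncomputable def C2 (r l k : ℕ) : ℝ :=
  (1 / 2 ^ (2 * l)) * ((2 * (l : ℝ) + 1) / (2 * (r : ℝ) - 1)) *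
    (((r : ℝ) + (l : ℝ)) / (l : ℝ)) * ((k : ℝ) / ((r : ℝ) - (k : ℝ))) *
    (Nat.choose l k : ℝ) * ((Nat.choose r k : ℝ))⁻¹ * (Nat.choose (2 * l) l : ℝ) *
    ((Nat.choose (l + r) r : ℝ))⁻¹ * (Nat.choose (2 * r) (2 * k + 1) : ℝ)




noncomputable def psB (s : ℕ) : PowerSeries ℝ :=
  PowerSeries.mk fun m => ((s + m).choose s : ℝ)

noncomputable def sqmap (f : PowerSeries ℝ) : PowerSeries ℝ :=
  PowerSeries.mk fun m => if m % 2 = 0 then PowerSeries.coeff (m / 2) f else 0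

lemma sqmap_one : sqmap 1 = 1 := by
  ext n
  simp only [sqmap, coeff_mk, coeff_one]
  rcases n with _ | n
  · simp
  · rcases Nat.even_or_odd (n+1) with h | h
    · have h2 : (n+1) % 2 = 0 := Nat.even_iff.mp h
      have h3 : (n+1)/2 ≠ 0 := by omega
      simp [h2, h3]
    · have h2 : (n+1) % 2 = 1 := Nat.odd_iff.mp h
      simp [h2]

lemma sqmap_mul (f g : PowerSeries ℝ) : sqmap (f * g) = sqmap f * sqmap g := by
  ext n
  rw [coeff_mul]
  simp only [sqmap, coeff_mk]
  rcases Nat.even_or_odd n with hn | hn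
  · obtain ⟨m, rfl⟩ := hn
    rw [if_pos (by omega : (m + m) % 2 = 0), coeff_mul,
      (by omega : (m + m) / 2 = m)]
    refine Finset.sum_bij_ne_zero (fun p _ _ => (2 * p.1, 2 * p.2)) ?_ ?_ ?_ ?_
    · intro p hp _
      rw [Finset.HasAntidiagonal.mem_antidiagonal] at hp
      show (2 * p.1, 2 * p.2) ∈ HasAntidiagonal.antidiagonal (m + m)
      rw [Finset.HasAntidiagonal.mem_antidiagonal]
      omega
    · intro p hp hp' q hq hq' h
      simp only [Prod.mk.injEq] at h
      ext <;> omega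
    · intro q hq hq'
      rw [Finset.HasAntidiagonal.mem_antidiagonal] at hq
      have h1 : q.1 % 2 = 0 := by
        by_contra h
        exact hq' (by rw [if_neg h, zero_mul])
      have h2 : q.2 % 2 = 0 := by omega
      refine ⟨(q.1/2, q.2/2), by rw [Finset.HasAntidiagonal.mem_antidiagonal]; omega, ?_, ?_⟩
      · rw [if_pos h1, if_pos h2] at hq'
        exact hq'
      · show (2 * (q.1/2), 2 * (q.2/2)) = q
        obtain ⟨q1, q2⟩ := q
        simp only [Prod.mk.injEq]
        constructor <;> omega
    · intro p hp hp'
      simp only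
      rw [if_pos (by omega : (2 * p.1) % 2 = 0), if_pos (by omega : (2 * p.2) % 2 = 0),
        (by omega : 2 * p.1 / 2 = p.1), (by omega : 2 * p.2 / 2 = p.2)]
  · obtain ⟨m, rfl⟩ := hn
    rw [if_neg (by omega : ¬ (2*m+1) % 2 = 0)]
    refine (Finset.sum_eq_zero ?_).symm
    intro p hp
    rw [Finset.HasAntidiagonal.mem_antidiagonal] at hp
    rcases Nat.even_or_odd p.1 with h1 | h1
    · have h2 : ¬ p.2 % 2 = 0 := by
        have := Nat.even_iff.mp h1; omega
      rw [if_neg h2, mul_zero]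
    · have h2 : ¬ p.1 % 2 = 0 := by
        have := Nat.odd_iff.mp h1; omega
      rw [if_neg h2, zero_mul]

lemma sqmap_pow (f : PowerSeries ℝ) (n : ℕ) : sqmap (f ^ n) = (sqmap f) ^ n := by
  induction n with
  | zero => simpa using sqmap_one
  | succ n ih => rw [pow_succ, pow_succ, sqmap_mul, ih]

lemma sqmap_one_sub_X : sqmap (1 - X) = 1 - X ^ 2 := by
  ext n
  simp only [sqmap, coeff_mk, map_sub, coeff_one, coeff_X, coeff_X_pow]
  match n with
  | 0 => norm_num
  | 1 => norm_num
  | 2 => norm_num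
  | (n+3) =>
    have h1 : ¬ (n + 3 = 0) := by omega
    have h2 : ¬ (n + 3 = 2) := by omega
    rcases Nat.even_or_odd (n+3) with h | h
    · have e : (n+3) % 2 = 0 := Nat.even_iff.mp h
      have e0 : ¬ ((n+3)/2 = 0) := by omega
      have e1 : ¬ ((n+3)/2 = 1) := by omega
      simp [e, e0, e1, h1, h2]
    · have e : (n+3) % 2 = 1 := Nat.odd_iff.mp h
      simp [e, h1, h2]


lemma hockey (s n : ℕ) : ∑ i ∈ Finset.range (n+1), (s + i).choose s = (s + n + 1).choose (s + 1) := by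
  induction n with
  | zero => simp
  | succ n ih =>
    rw [Finset.sum_range_succ, ih, show s + (n+1) = s + n + 1 by omega,
      Nat.choose_succ_succ' (s+n+1) s]
    omega

lemma psB_mul (s : ℕ) : psB (s + 1) = psB s * psB 0 := by
  ext n
  rw [coeff_mul]
  simp only [psB, coeff_mk, Nat.choose_zero_right, Nat.cast_one, mul_one]
  rw [Finset.Nat.sum_antidiagonal_eq_sum_range_succ_mk]
  simp only
  rw [show (∑ i ∈ range (n+1), ((s + i).choose s : ℝ))
      = ((∑ i ∈ range (n+1), (s + i).choose s : ℕ) : ℝ) by push_cast; ring]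
  rw [hockey]
  congr 2
  omega

lemma psB_zero_mul : psB 0 * (1 - X) = 1 := by
  ext n
  rw [mul_sub, mul_one, map_sub]
  rcases n with _ | n
  · simp [psB, coeff_zero_eq_constantCoeff, map_mul]
  · rw [PowerSeries.coeff_succ_mul_X]
    simp [psB, coeff_one]

lemma psB_mul_one_sub_X (s : ℕ) : psB s * (1 - X) ^ (s + 1) = 1 := by
  induction s with
  | zero => rw [pow_one]; exact psB_zero_mul
  | succ s ih =>
    rw [psB_mul, pow_succ, show psB s * psB 0 * ((1-X)^(s+1) * (1-X))
        = (psB s * (1-X)^(s+1)) * (psB 0 * (1-X)) by ring, ih, psB_zero_mul, one_mul]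

lemma one_sub_X_ne : (1 - X : PowerSeries ℝ) ≠ 0 := fun h => by
  have := congrArg (constantCoeff (R := ℝ)) h
  simp at this

lemma psA_mul_one_add_X (s : ℕ) : sqmap (psB s) * (1 + X) ^ (s + 1) = psB s := by
  have h1 : sqmap (psB s) * ((1 - X) * (1 + X)) ^ (s+1) = 1 := by
    have h2 : ((1 - X) * (1 + X) : PowerSeries ℝ) ^ (s+1) = sqmap ((1 - X)^(s+1)) := by
      rw [sqmap_pow, sqmap_one_sub_X]; ring
    rw [h2, ← sqmap_mul, psB_mul_one_sub_X, sqmap_one]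
  have h3 : (sqmap (psB s) * (1 + X) ^ (s+1)) * (1 - X)^(s+1)
      = psB s * (1 - X)^(s+1) :=
    calc (sqmap (psB s) * (1 + X) ^ (s+1)) * (1 - X)^(s+1)
        = sqmap (psB s) * ((1 - X) * (1 + X)) ^ (s+1) := by rw [mul_pow]; ring
      _ = 1 := h1
      _ = psB s * (1 - X)^(s+1) := (psB_mul_one_sub_X s).symm
  exact mul_right_cancel₀ (pow_ne_zero _ one_sub_X_ne) h3

lemma coeff_one_add_X_pow (N n : ℕ) :
    PowerSeries.coeff n ((1 + X) ^ N) = (N.choose n : ℝ) := by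
  have h : ((1 + X : PowerSeries ℝ)) ^ N = (((Polynomial.X + 1 : Polynomial ℝ) ^ N : Polynomial ℝ) : PowerSeries ℝ) := by
    rw [Polynomial.coe_pow, Polynomial.coe_add, Polynomial.coe_X, Polynomial.coe_one, add_comm]
  rw [h, Polynomial.coeff_coe, Polynomial.coeff_X_add_one_pow]

lemma trino (n j s : ℕ) (h : j + s ≤ n) :
    n.choose j * (n - j).choose s = n.choose s * (n - s).choose j := by
  have h1 := Nat.choose_mul (n := n) (show j ≤ j + s by omega)
  have h2 := Nat.choose_mul (n := n) (show s ≤ j + s by omega)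
  rw [show j + s - j = s by omega] at h1
  rw [show j + s - s = j by omega] at h2
  have h3 : (j+s).choose j = (j+s).choose s := by
    have := Nat.choose_symm (show j ≤ j + s by omega)
    rw [show j + s - j = s by omega] at this
    exact this.symm
  rw [h3, h2] at h1
  exact h1.symm

lemma keyI_nat_rhs (s m : ℕ) :
    ∑ i ∈ Finset.range (2*m+2), (s+i).choose s * (s+2*m+1).choose (2*m+1-i)
      = (s+2*m+1).choose (2*m+1) * 2^(2*m+1) := by
  rw [← Nat.sum_range_choose (2*m+1), Finset.mul_sum]
  apply Finset.sum_congr rfl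
  intro i hi
  rw [Finset.mem_range] at hi
  have h := trino (s+2*m+1) (2*m+1-i) s (by omega)
  rw [show s+2*m+1 - (2*m+1-i) = s + i by omega,
    show s+2*m+1 - s = 2*m+1 by omega] at h
  have h4 : (s+2*m+1).choose s = (s+2*m+1).choose (2*m+1) := by
    have := Nat.choose_symm (show s ≤ s+2*m+1 by omega)
    rw [show s + 2*m+1 - s = 2*m+1 by omega] at this
    exact this.symm
  have h5 : (2*m+1).choose (2*m+1-i) = (2*m+1).choose i := by
    have := Nat.choose_symm (show i ≤ 2*m+1 by omega)
    rw [this]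
  rw [h4, h5] at h
  calc (s+i).choose s * (s+2*m+1).choose (2*m+1-i)
      = (s+2*m+1).choose (2*m+1-i) * (s+i).choose s := by ring
    _ = (s+2*m+1).choose (2*m+1) * (2*m+1).choose i := h

lemma keyI (s m : ℕ) :
    ∑ k ∈ Finset.range (m+1), ((s + m - k).choose s : ℝ) * ((2*s + 2*m + 2).choose (2*k+1) : ℝ)
      = 2^(2*m+1) * ((s + 2*m + 1).choose (2*m+1) : ℝ) := by
  have hmain : PowerSeries.coeff (2*m+1) (sqmap (psB s) * (1+X)^(2*s+2*m+2))
      = PowerSeries.coeff (2*m+1) (psB s * (1+X)^(s+2*m+1)) := by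
    rw [show 2*s+2*m+2 = (s+1) + (s+2*m+1) by omega, pow_add, ← mul_assoc,
      psA_mul_one_add_X]
  -- compute LHS of hmain
  have hl : PowerSeries.coeff (2*m+1) (sqmap (psB s) * (1+X)^(2*s+2*m+2))
      = ∑ a ∈ Finset.range (m+1), ((s + a).choose s : ℝ) * ((2*s+2*m+2).choose (2*m+1-2*a) : ℝ) := by
    rw [coeff_mul]
    refine (Finset.sum_bij_ne_zero (fun a _ _ => (2*a, 2*m+1-2*a)) ?_ ?_ ?_ ?_).symm
    · intro a ha _
      rw [Finset.mem_range] at ha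
      show (2*a, 2*m+1-2*a) ∈ Finset.HasAntidiagonal.antidiagonal (2*m+1)
      rw [Finset.HasAntidiagonal.mem_antidiagonal]; omega
    · intro a ha ha' b hb hb' h
      rw [Finset.mem_range] at ha hb
      simp only [Prod.mk.injEq] at h
      omega
    · intro q hq hq'
      rw [Finset.HasAntidiagonal.mem_antidiagonal] at hq
      have h1 : q.1 % 2 = 0 := by
        by_contra h
        apply hq'
        simp only [sqmap, coeff_mk, if_neg h, map_zero, zero_mul]
      refine ⟨q.1/2, by rw [Finset.mem_range]; omega, ?_, ?_⟩
      · intro h0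
        apply hq'
        have hc : (PowerSeries.coeff q.1) (sqmap (psB s)) = ((s + q.1/2).choose s : ℝ) := by
          simp only [sqmap, coeff_mk, if_pos h1, psB]
        rw [hc, show q.2 = 2*m+1-2*(q.1/2) by omega, coeff_one_add_X_pow]
        exact h0
      · show (2*(q.1/2), 2*m+1-2*(q.1/2)) = q
        obtain ⟨q1, q2⟩ := q
        simp only [Prod.mk.injEq]
        constructor <;> omega
    · intro a ha ha'
      rw [Finset.mem_range] at ha
      simp only [sqmap, coeff_mk]
      rw [if_pos (by omega : (2*a) % 2 = 0), (by omega : 2*a/2 = a),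
        coeff_one_add_X_pow]
      simp only [psB, coeff_mk]
  -- compute RHS of hmain
  have hr : PowerSeries.coeff (2*m+1) (psB s * (1+X)^(s+2*m+1))
      = 2^(2*m+1) * ((s + 2*m + 1).choose (2*m+1) : ℝ) := by
    rw [coeff_mul, Finset.Nat.sum_antidiagonal_eq_sum_range_succ_mk]
    simp only [psB, coeff_mk, coeff_one_add_X_pow]
    rw [show (∑ i ∈ Finset.range (2*m+1+1), ((s + i).choose s : ℝ) * ((s+2*m+1).choose (2*m+1-i) : ℝ))
        = ((∑ i ∈ Finset.range (2*m+2), (s + i).choose s * (s+2*m+1).choose (2*m+1-i) : ℕ) : ℝ) by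
      push_cast
      apply Finset.sum_congr (by norm_num) (fun _ _ => rfl)]
    rw [keyI_nat_rhs]
    push_cast; ring
  -- reflect the goal sum
  have hrefl : ∑ k ∈ Finset.range (m+1), ((s + m - k).choose s : ℝ) * ((2*s + 2*m + 2).choose (2*k+1) : ℝ)
      = ∑ a ∈ Finset.range (m+1), ((s + a).choose s : ℝ) * ((2*s+2*m+2).choose (2*m+1-2*a) : ℝ) := by
    rw [← Finset.sum_range_reflect
      (fun k => ((s + m - k).choose s : ℝ) * ((2*s + 2*m + 2).choose (2*k+1) : ℝ)) (m+1)]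
    apply Finset.sum_congr rfl
    intro a ha
    rw [Finset.mem_range] at ha
    rw [show m + 1 - 1 - a = m - a by omega, show s + m - (m - a) = s + a by omega,
      show 2*(m-a)+1 = 2*m+1-2*a by omega]
  rw [hrefl, ← hl, hmain, hr]


lemma term1 (k c s : ℕ) :
    C1 (k+c+s+1) (k+c+1) k * (2^(2*(k+c)+1) * ((s+2*(k+c)+1).choose (2*(k+c)+1) : ℝ))
      = ((s+(c)).choose s : ℝ) * (((2*(k+c+s+1)).choose (2*k+1)) : ℝ) := by
  have e1 : ((k+c+1).choose k : ℝ) = (k+c+1) ! / (k ! * (c+1) !) := by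
    rw [Nat.cast_choose ℝ (show k ≤ k+c+1 by omega), show k+c+1-k = c+1 from by omega]
  have e2 : ((k+c+s+1).choose k : ℝ) = (k+c+s+1) ! / (k ! * (c+s+1) !) := by
    rw [Nat.cast_choose ℝ (show k ≤ k+c+s+1 by omega), show k+c+s+1-k = c+s+1 from by omega]
  have e3 : ((2*(k+c+1)).choose (k+c+1) : ℝ) = (2*(k+c+1)) ! / ((k+c+1) ! * (k+c+1) !) := by
    rw [Nat.cast_choose ℝ (show k+c+1 ≤ 2*(k+c+1) by omega),
      show 2*(k+c+1)-(k+c+1) = k+c+1 from by omega]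
  have e4 : (((k+c+1)+(k+c+s+1)).choose (k+c+s+1) : ℝ)
      = ((k+c+1)+(k+c+s+1)) ! / ((k+c+s+1) ! * (k+c+1) !) := by
    rw [Nat.cast_choose ℝ (show k+c+s+1 ≤ (k+c+1)+(k+c+s+1) by omega),
      show (k+c+1)+(k+c+s+1)-(k+c+s+1) = k+c+1 from by omega]
  have e5 : ((s+2*(k+c)+1).choose (2*(k+c)+1) : ℝ) = (s+2*(k+c)+1) ! / ((2*(k+c)+1) ! * s !) := by
    rw [Nat.cast_choose ℝ (show 2*(k+c)+1 ≤ s+2*(k+c)+1 by omega),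
      show s+2*(k+c)+1-(2*(k+c)+1) = s from by omega]
  have e6 : ((s+c).choose s : ℝ) = (s+c) ! / (s ! * c !) := by
    rw [Nat.cast_choose ℝ (show s ≤ s+c by omega), show s+c-s = c from by omega]
  have p1 : ((c+1) ! : ℝ) = (c+1) * c ! := by
    rw [Nat.factorial_succ]; push_cast; ring
  have p2 : ((c+s+1) ! : ℝ) = (c+s+1) * (s+c) ! := by
    rw [show c+s+1 = (s+c)+1 from by omega, Nat.factorial_succ]; push_cast; ring
  have p3 : (((k+c+1)+(k+c+s+1)) ! : ℝ) = (2*(k+c)+s+2) * (s+2*(k+c)+1) ! := by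
    rw [show (k+c+1)+(k+c+s+1) = (s+2*(k+c)+1)+1 from by omega, Nat.factorial_succ]
    push_cast; ring
  have p4 : ((2*(k+c+1)) ! : ℝ) = (2*(k+c)+2) * (2*(k+c)+1) ! := by
    rw [show 2*(k+c+1) = (2*(k+c)+1)+1 from by omega, Nat.factorial_succ]
    push_cast; ring
  have q1 : (((k+c+s+1):ℕ):ℝ) - (k:ℝ) = (c:ℝ)+(s:ℝ)+1 := by push_cast; ring
  have q2 : (((k+c+1):ℕ):ℝ) - (k:ℝ) = (c:ℝ)+1 := by push_cast; ring
  have n1 : (k ! : ℝ) ≠ 0 := Nat.cast_ne_zero.mpr (Nat.factorial_ne_zero _)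
  have n2 : (c ! : ℝ) ≠ 0 := Nat.cast_ne_zero.mpr (Nat.factorial_ne_zero _)
  have n3 : (s ! : ℝ) ≠ 0 := Nat.cast_ne_zero.mpr (Nat.factorial_ne_zero _)
  have n4 : ((k+c+1) ! : ℝ) ≠ 0 := Nat.cast_ne_zero.mpr (Nat.factorial_ne_zero _)
  have n5 : ((k+c+s+1) ! : ℝ) ≠ 0 := Nat.cast_ne_zero.mpr (Nat.factorial_ne_zero _)
  have n6 : ((s+c) ! : ℝ) ≠ 0 := Nat.cast_ne_zero.mpr (Nat.factorial_ne_zero _)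
  have n7 : ((s+2*(k+c)+1) ! : ℝ) ≠ 0 := Nat.cast_ne_zero.mpr (Nat.factorial_ne_zero _)
  have n8 : ((2*(k+c)+1) ! : ℝ) ≠ 0 := Nat.cast_ne_zero.mpr (Nat.factorial_ne_zero _)
  have n9 : ((c:ℝ)+(s:ℝ)+1) ≠ 0 := by positivity
  have n10 : (((k+c+1):ℕ):ℝ) ≠ 0 := by positivity
  have n11 : (2:ℝ)^(2*(k+c+1)) ≠ 0 := by positivity
  have n12 : ((c:ℝ)+1) ≠ 0 := by positivity
  rw [C1, e1, e2, e3, e4, e5, e6, q1, q2, p1, p2, p3, p4]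
  have hpow : (2:ℝ)^(2*(k+c+1)) = 2^(2*(k+c)+1) * 2 := by
    rw [show 2*(k+c+1) = (2*(k+c)+1)+1 from by omega, pow_succ]
  rw [hpow]
  field_simp
  push_cast
  ring


lemma term2 (k c s : ℕ) :
    C2 (k+c+s+2) (k+c+1) (k+1)
        * (2^(2*(k+c)+1) * ((2*(k+c)+2*s+3 : ℕ):ℝ) * ((s+1 : ℕ):ℝ)
          * ((2*(k+c)+s+2).choose (2*(k+c)+1) : ℝ))
      = ((2*(k+c)+3 : ℕ):ℝ) * ((k+1 : ℕ):ℝ) * ((s+c).choose s : ℝ)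
          * ((2*(k+c+s+2)).choose (2*(k+1)+1) : ℝ) := by
  have e1 : ((k+c+1).choose (k+1) : ℝ) = (k+c+1)! / ((k+1)! * c !) := by
    rw [Nat.cast_choose ℝ (show k+1 ≤ k+c+1 by omega), show k+c+1-(k+1) = c from by omega]
  have e2 : ((k+c+s+2).choose (k+1) : ℝ) = (k+c+s+2)! / ((k+1)! * (c+s+1)!) := by
    rw [Nat.cast_choose ℝ (show k+1 ≤ k+c+s+2 by omega),
      show k+c+s+2-(k+1) = c+s+1 from by omega]
  have e3 : ((2*(k+c+1)).choose (k+c+1) : ℝ) = (2*(k+c+1))! / ((k+c+1)! * (k+c+1)!) := by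
    rw [Nat.cast_choose ℝ (show k+c+1 ≤ 2*(k+c+1) by omega),
      show 2*(k+c+1)-(k+c+1) = k+c+1 from by omega]
  have e4 : (((k+c+1)+(k+c+s+2)).choose (k+c+s+2) : ℝ)
      = ((k+c+1)+(k+c+s+2))! / ((k+c+s+2)! * (k+c+1)!) := by
    rw [Nat.cast_choose ℝ (show k+c+s+2 ≤ (k+c+1)+(k+c+s+2) by omega),
      show (k+c+1)+(k+c+s+2)-(k+c+s+2) = k+c+1 from by omega]
  have e5 : ((2*(k+c)+s+2).choose (2*(k+c)+1) : ℝ)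
      = (2*(k+c)+s+2)! / ((2*(k+c)+1)! * (s+1)!) := by
    rw [Nat.cast_choose ℝ (show 2*(k+c)+1 ≤ 2*(k+c)+s+2 by omega),
      show 2*(k+c)+s+2-(2*(k+c)+1) = s+1 from by omega]
  have e6 : ((s+c).choose s : ℝ) = (s+c)! / (s ! * c !) := by
    rw [Nat.cast_choose ℝ (show s ≤ s+c by omega), show s+c-s = c from by omega]
  have p1 : ((c+s+1)! : ℝ) = ((c:ℝ)+(s:ℝ)+1) * (s+c)! := by
    rw [show c+s+1 = (s+c)+1 from by omega, Nat.factorial_succ]; push_cast; ring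
  have p2 : (((k+c+1)+(k+c+s+2))! : ℝ) = (2*((k:ℝ)+(c:ℝ))+(s:ℝ)+3) * (2*(k+c)+s+2)! := by
    rw [show (k+c+1)+(k+c+s+2) = (2*(k+c)+s+2)+1 from by omega, Nat.factorial_succ]
    push_cast; ring
  have p3 : ((2*(k+c+1))! : ℝ) = (2*((k:ℝ)+(c:ℝ))+2) * (2*(k+c)+1)! := by
    rw [show 2*(k+c+1) = (2*(k+c)+1)+1 from by omega, Nat.factorial_succ]
    push_cast; ring
  have p4 : ((s+1)! : ℝ) = ((s:ℝ)+1) * s ! := by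
    rw [Nat.factorial_succ]; push_cast; ring
  have q1 : (((k+c+s+2):ℕ):ℝ) - (((k+1):ℕ):ℝ) = (c:ℝ)+(s:ℝ)+1 := by push_cast; ring
  have n1 : ((k+1)! : ℝ) ≠ 0 := Nat.cast_ne_zero.mpr (Nat.factorial_ne_zero _)
  have n2 : (c ! : ℝ) ≠ 0 := Nat.cast_ne_zero.mpr (Nat.factorial_ne_zero _)
  have n3 : (s ! : ℝ) ≠ 0 := Nat.cast_ne_zero.mpr (Nat.factorial_ne_zero _)
  have n4 : ((k+c+1)! : ℝ) ≠ 0 := Nat.cast_ne_zero.mpr (Nat.factorial_ne_zero _)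
  have n5 : ((k+c+s+2)! : ℝ) ≠ 0 := Nat.cast_ne_zero.mpr (Nat.factorial_ne_zero _)
  have n6 : ((s+c)! : ℝ) ≠ 0 := Nat.cast_ne_zero.mpr (Nat.factorial_ne_zero _)
  have n7 : ((2*(k+c)+s+2)! : ℝ) ≠ 0 := Nat.cast_ne_zero.mpr (Nat.factorial_ne_zero _)
  have n8 : ((2*(k+c)+1)! : ℝ) ≠ 0 := Nat.cast_ne_zero.mpr (Nat.factorial_ne_zero _)
  have n9 : ((c:ℝ)+(s:ℝ)+1) ≠ 0 := by positivity
  have n10 : (((k+c+1):ℕ):ℝ) ≠ 0 := by positivity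
  have n11 : (2:ℝ)^(2*(k+c+1)) ≠ 0 := by positivity
  rw [C2, e1, e2, e3, e4, e5, e6, q1, p1, p2, p3, p4]
  have hpow : (2:ℝ)^(2*(k+c+1)) = 2^(2*(k+c)+1) * 2 := by
    rw [show 2*(k+c+1) = (2*(k+c)+1)+1 from by omega, pow_succ]
  have q2 : 2*((((k+c+s+2):ℕ)):ℝ) - 1 = 2*((k:ℝ)+(c:ℝ))+2*(s:ℝ)+3 := by push_cast; ring
  rw [hpow, q2]
  have n13 : (2*((k:ℝ)+(c:ℝ))+2*(s:ℝ)+3) ≠ 0 := by positivity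
  field_simp
  push_cast
  ring


lemma F2 (L s : ℕ) :
    2*((L:ℝ)+1) * (2*(L:ℝ)+3) * ((s+2*L+3).choose (2*L+3) : ℝ)
      = ((s:ℝ)+1) * ((s:ℝ)+2*(L:ℝ)+3) * ((s+2*L+2).choose (2*L+1) : ℝ) := by
  have e1 : ((s+2*L+3).choose (2*L+3) : ℝ) = (s+2*L+3)! / ((2*L+3)! * s !) := by
    rw [Nat.cast_choose ℝ (show 2*L+3 ≤ s+2*L+3 by omega),
      show s+2*L+3-(2*L+3) = s from by omega]
  have e2 : ((s+2*L+2).choose (2*L+1) : ℝ) = (s+2*L+2)! / ((2*L+1)! * (s+1)!) := by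
    rw [Nat.cast_choose ℝ (show 2*L+1 ≤ s+2*L+2 by omega),
      show s+2*L+2-(2*L+1) = s+1 from by omega]
  have p1 : ((2*L+3)! : ℝ) = (2*(L:ℝ)+3) * (2*(L:ℝ)+2) * (2*L+1)! := by
    rw [show 2*L+3 = (2*L+2)+1 from by omega, Nat.factorial_succ,
      show 2*L+2 = (2*L+1)+1 from by omega, Nat.factorial_succ]
    push_cast; ring
  have p2 : ((s+1)! : ℝ) = ((s:ℝ)+1) * s ! := by
    rw [Nat.factorial_succ]; push_cast; ring
  have p3 : ((s+2*L+3)! : ℝ) = ((s:ℝ)+2*(L:ℝ)+3) * (s+2*L+2)! := by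
    rw [show s+2*L+3 = (s+2*L+2)+1 from by omega, Nat.factorial_succ]; push_cast; ring
  have n1 : ((2*L+1)! : ℝ) ≠ 0 := Nat.cast_ne_zero.mpr (Nat.factorial_ne_zero _)
  have n2 : (s ! : ℝ) ≠ 0 := Nat.cast_ne_zero.mpr (Nat.factorial_ne_zero _)
  have n3 : ((s+2*L+2)! : ℝ) ≠ 0 := Nat.cast_ne_zero.mpr (Nat.factorial_ne_zero _)
  have n4 : (2*(L:ℝ)+3) ≠ 0 := by positivity
  have n5 : (2*(L:ℝ)+2) ≠ 0 := by positivity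
  have n6 : ((s:ℝ)+1) ≠ 0 := by positivity
  rw [e1, e2, p1, p2, p3]
  field_simp

lemma decompK (L s K : ℕ) (hK : K ≤ L+1) :
    (K:ℝ) * ((s + (L+1) - K).choose s : ℝ)
      = ((L:ℝ)+1) * ((s + (L+1) - K).choose s : ℝ)
        - ((s:ℝ)+1) * ((s + (L+1) - K).choose (s+1) : ℝ) := by
  have h := Nat.choose_succ_right_eq (s + (L+1) - K) s
  rw [show s + (L+1) - K - s = L+1-K from by omega] at h
  have h2 := congrArg (fun n : ℕ => (n : ℝ)) h
  push_cast [Nat.cast_sub hK] at h2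
  linear_combination h2


/-- Normalization of the general optimal weights:
(i) `Σ_{k=0}^{l-1} C^{r+l-1}_{l-1,k} = 1` for `1 ≤ l ≤ r`;
(ii) `Σ_{k=1}^{l} C^{r+l-1}_{l,k} = 1` for `1 ≤ l ≤ r-1`. -/
theorem optimal_weights_normalized (r : ℕ) (hr : 1 ≤ r) :
    (∀ l : ℕ, 1 ≤ l → l ≤ r → (∑ k ∈ Finset.range l, C1 r l k) = 1) ∧
      (∀ l : ℕ, 1 ≤ l → l ≤ r - 1 → (∑ k ∈ Finset.Icc 1 l, C2 r l k) = 1) := by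
  constructor
  · intro l hl1 hlr
    obtain ⟨m, rfl⟩ : ∃ m, l = m + 1 := ⟨l - 1, by omega⟩
    obtain ⟨s, rfl⟩ : ∃ s, r = m + s + 1 := ⟨r - (m + 1), by omega⟩
    set D : ℝ := 2^(2*m+1) * ((s+2*m+1).choose (2*m+1) : ℝ) with hDdef
    have hD : D ≠ 0 := by
      have : 0 < (s+2*m+1).choose (2*m+1) := Nat.choose_pos (by omega)
      have h2 : (0:ℝ) < ((s+2*m+1).choose (2*m+1) : ℝ) := by exact_mod_cast this
      positivity
    apply mul_right_cancel₀ hD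
    rw [one_mul, Finset.sum_mul]
    have hterm : ∀ k ∈ Finset.range (m+1),
        C1 (m+s+1) (m+1) k * D
          = ((s + m - k).choose s : ℝ) * ((2*s + 2*m + 2).choose (2*k+1) : ℝ) := by
      intro k hk
      rw [Finset.mem_range] at hk
      have h := term1 k (m-k) s
      rw [show k+(m-k) = m from by omega] at h
      rw [show m+s+1 = m+s+1 from rfl] at h
      rw [show s+(m-k) = s+m-k from by omega, show 2*(m+s+1) = 2*s+2*m+2 from by omega] at h
      exact h
    rw [Finset.sum_congr rfl hterm, keyI s m, hDdef]
  · intro l hl1 hlr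
    obtain ⟨L, rfl⟩ : ∃ L, l = L + 1 := ⟨l - 1, by omega⟩
    obtain ⟨s, rfl⟩ : ∃ s, r = L + s + 2 := ⟨r - (L + 2), by omega⟩
    set D : ℝ := 2^(2*L+1) * ((2*L+2*s+3 : ℕ):ℝ) * ((s+1 : ℕ):ℝ)
        * ((2*L+s+2).choose (2*L+1) : ℝ) with hDdef
    have hD : D ≠ 0 := by
      have : 0 < (2*L+s+2).choose (2*L+1) := Nat.choose_pos (by omega)
      have h2 : (0:ℝ) < ((2*L+s+2).choose (2*L+1) : ℝ) := by exact_mod_cast this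
      have h3 : (0:ℝ) < ((2*L+2*s+3 : ℕ):ℝ) := by positivity
      have h4 : (0:ℝ) < ((s+1 : ℕ):ℝ) := by positivity
      positivity
    apply mul_right_cancel₀ hD
    rw [one_mul, Finset.sum_mul]
    have hIcc : Finset.Icc 1 (L+1) = Finset.Ico 1 (L+2) := by
      rw [← Finset.Ico_add_one_right_eq_Icc]; rfl
    rw [hIcc, Finset.sum_Ico_eq_sum_range]
    rw [show L + 2 - 1 = L + 1 from by omega]
    have hterm : ∀ j ∈ Finset.range (L+1),
        C2 (L+s+2) (L+1) (1+j) * D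
          = ((2*L+3 : ℕ):ℝ) * (((j+1) : ℕ):ℝ)
              * ((s + (L+1) - (j+1)).choose s : ℝ)
              * ((2*s + 2*(L+1) + 2).choose (2*(j+1)+1) : ℝ) := by
      intro j hj
      rw [Finset.mem_range] at hj
      rw [show 1+j = j+1 from by omega, hDdef]
      have h := term2 j (L-j) s
      rw [show j+(L-j) = L from by omega] at h
      rw [show s+(L-j) = s+(L+1)-(j+1) from by omega] at h
      rw [show 2*(L+s+2) = 2*s+2*(L+1)+2 from by omega] at h
      exact h
    rw [Finset.sum_congr rfl hterm]
    have hsplit : ∀ j ∈ Finset.range (L+1),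
        ((2*L+3 : ℕ):ℝ) * (((j+1) : ℕ):ℝ)
            * ((s + (L+1) - (j+1)).choose s : ℝ)
            * ((2*s + 2*(L+1) + 2).choose (2*(j+1)+1) : ℝ)
          = ((2*L+3 : ℕ):ℝ) * (((L:ℝ)+1) * ((s + (L+1) - (j+1)).choose s : ℝ)
                - ((s:ℝ)+1) * ((s + (L+1) - (j+1)).choose (s+1) : ℝ))
              * ((2*s + 2*(L+1) + 2).choose (2*(j+1)+1) : ℝ) := by
      intro j hj
      rw [Finset.mem_range] at hj
      have hd := decompK L s (j+1) (by omega)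
      push_cast at hd ⊢
      linear_combination ((2*(L:ℝ)+3) * ((2*s + 2*(L+1) + 2).choose (2*(j+1)+1) : ℝ)) * hd
    rw [Finset.sum_congr rfl hsplit]
    -- now reintroduce the K = 0 term and split the sum
    have hfull :
        (∑ j ∈ Finset.range (L+1),
          ((2*L+3 : ℕ):ℝ) * (((L:ℝ)+1) * ((s + (L+1) - (j+1)).choose s : ℝ)
                - ((s:ℝ)+1) * ((s + (L+1) - (j+1)).choose (s+1) : ℝ))
              * ((2*s + 2*(L+1) + 2).choose (2*(j+1)+1) : ℝ))
          = ∑ K ∈ Finset.range (L+2),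
            ((2*L+3 : ℕ):ℝ) * (((L:ℝ)+1) * ((s + (L+1) - K).choose s : ℝ)
                  - ((s:ℝ)+1) * ((s + (L+1) - K).choose (s+1) : ℝ))
                * ((2*s + 2*(L+1) + 2).choose (2*K+1) : ℝ) := by
      rw [Finset.sum_range_succ'
        (fun K => ((2*L+3 : ℕ):ℝ) * (((L:ℝ)+1) * ((s + (L+1) - K).choose s : ℝ)
                  - ((s:ℝ)+1) * ((s + (L+1) - K).choose (s+1) : ℝ))
                * ((2*s + 2*(L+1) + 2).choose (2*K+1) : ℝ)) (L+1)]
      have hzero :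
          ((2*L+3 : ℕ):ℝ) * (((L:ℝ)+1) * ((s + (L+1) - 0).choose s : ℝ)
                - ((s:ℝ)+1) * ((s + (L+1) - 0).choose (s+1) : ℝ))
              * ((2*s + 2*(L+1) + 2).choose (2*0+1) : ℝ) = 0 := by
        rw [← decompK L s 0 (by omega)]
        norm_num
      rw [hzero]
      norm_num
    rw [hfull]
    -- split into the two keyI sums
    have hS1 : (∑ K ∈ Finset.range (L+2),
          ((s + (L+1) - K).choose s : ℝ) * ((2*s + 2*(L+1) + 2).choose (2*K+1) : ℝ))
        = 2^(2*(L+1)+1) * ((s + 2*(L+1) + 1).choose (2*(L+1)+1) : ℝ) := keyI s (L+1)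
    have hS2 : (∑ K ∈ Finset.range (L+2),
          ((s + (L+1) - K).choose (s+1) : ℝ) * ((2*s + 2*(L+1) + 2).choose (2*K+1) : ℝ))
        = 2^(2*L+1) * ((s + 2*L + 2).choose (2*L+1) : ℝ) := by
      rw [Finset.sum_range_succ]
      have hlast : ((s + (L+1) - (L+1)).choose (s+1) : ℝ) = 0 := by
        rw [show s + (L+1) - (L+1) = s from by omega]
        exact_mod_cast Nat.choose_eq_zero_of_lt (by omega)
      rw [hlast, zero_mul, add_zero]
      have h := keyI (s+1) L
      calc (∑ K ∈ Finset.range (L+1),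
            ((s + (L+1) - K).choose (s+1) : ℝ) * ((2*s + 2*(L+1) + 2).choose (2*K+1) : ℝ))
          = ∑ K ∈ Finset.range (L+1),
            (((s+1) + L - K).choose (s+1) : ℝ) * ((2*(s+1) + 2*L + 2).choose (2*K+1) : ℝ) := by
            apply Finset.sum_congr rfl
            intro K hK
            rw [Finset.mem_range] at hK
            rw [show s + (L+1) - K = (s+1) + L - K from by omega,
              show 2*s + 2*(L+1) + 2 = 2*(s+1) + 2*L + 2 from by omega]
        _ = 2^(2*L+1) * (((s+1) + 2*L + 1).choose (2*L+1) : ℝ) := h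
        _ = 2^(2*L+1) * ((s + 2*L + 2).choose (2*L+1) : ℝ) := by
            rw [show (s+1) + 2*L + 1 = s + 2*L + 2 from by omega]
    calc (∑ K ∈ Finset.range (L+2),
            ((2*L+3 : ℕ):ℝ) * (((L:ℝ)+1) * ((s + (L+1) - K).choose s : ℝ)
                  - ((s:ℝ)+1) * ((s + (L+1) - K).choose (s+1) : ℝ))
                * ((2*s + 2*(L+1) + 2).choose (2*K+1) : ℝ))
        = ((2*L+3 : ℕ):ℝ) * (((L:ℝ)+1) *
            (∑ K ∈ Finset.range (L+2),
              ((s + (L+1) - K).choose s : ℝ) * ((2*s + 2*(L+1) + 2).choose (2*K+1) : ℝ))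
            - ((s:ℝ)+1) *
            (∑ K ∈ Finset.range (L+2),
              ((s + (L+1) - K).choose (s+1) : ℝ) * ((2*s + 2*(L+1) + 2).choose (2*K+1) : ℝ))) := by
          simp only [mul_sub, sub_mul, Finset.mul_sum, Finset.sum_sub_distrib]
          congr 1 <;> (apply Finset.sum_congr rfl; intro K hK; ring)
      _ = D := by
          rw [hS1, hS2, hDdef]
          have hF := F2 L s
          rw [show s + 2*(L+1) + 1 = s+2*L+3 from by omega,
            show 2*(L+1)+1 = 2*L+3 from by omega,
            show 2*L+s+2 = s+2*L+2 from by omega]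
          push_cast
          linear_combination (2:ℝ)^(2*L+2) * hF
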